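/- Let 0 ≤ j_1 ≤ j_2 ≤ … ≤ j_n ≤ m and let (t_0=0, t_1, …, t_m) be any payment profile such that t_{j_1} − c_{1,j_1} ≥ 0 and, for every agent i ∈ {2,…,n}, t_{j_i} − c_{i,j_i} ≥ t_{j_{i−1}} − c_{i,j_{i−1}} (in particular these hold whenever j_i is a best response for agent i). Then the principal's payoff satisfies Σ_{i=1}^n (ρ_{j_i} − t_{j_i}) ≤ Σ_{i=1}^{n−1} ( ρ_{j_i} − c_{i,j_i} − (n−i)(c_{i,j_i} − c_{i+1,j_i}) ) + ρ_{j_n} − c_{n,j_n}. -/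

import Mathlib

/-- For any weakly increasing `0 ≤ j_1 ≤ … ≤ j_n ≤ m` and any payment profile
satisfying the incentive inequalities, the principal's payoff is at most the bound
`Σ_{i=1}^{n-1}(ρ_{j_i} - c_{i,j_i} - (n-i)(c_{i,j_i} - c_{i+1,j_i})) + ρ_{j_n} - c_{n,j_n}`. -/
theorem stmt_1 (n m : ℕ) (hn : 1 ≤ n) (ρ : ℕ → ℝ) (c : ℕ → ℕ → ℝ) (t : ℕ → ℝ)
    (j : ℕ → ℕ)
    (hρ0 : ρ 0 = 0) (hρ : ∀ k ≤ m, 0 ≤ ρ k)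
    (hc0 : ∀ i, 1 ≤ i → i ≤ n → c i 0 = 0)
    (hcnn : ∀ i, 1 ≤ i → i ≤ n → ∀ k ≤ m, 0 ≤ c i k)
    (ht0 : t 0 = 0)
    (hjm : ∀ i, 1 ≤ i → i ≤ n → j i ≤ m)
    (hjmono : ∀ i, 1 ≤ i → i < n → j i ≤ j (i + 1))
    (h1 : 0 ≤ t (j 1) - c 1 (j 1))
    (hic : ∀ i, 2 ≤ i → i ≤ n → t (j (i - 1)) - c i (j (i - 1)) ≤ t (j i) - c i (j i)) :
    ∑ i ∈ Finset.Icc 1 n, (ρ (j i) - t (j i)) ≤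
      ∑ i ∈ Finset.Icc 1 (n - 1),
        (ρ (j i) - c i (j i) - ((n : ℝ) - i) * (c i (j i) - c (i + 1) (j i)))
      + (ρ (j n) - c n (j n)) := by
  set u : ℕ → ℝ := fun i => t (j i) - c i (j i) with hu
  set d : ℕ → ℝ := fun k => c k (j k) - c (k + 1) (j k) with hd
  -- per-agent claim
  have claimC : ∀ i, 1 ≤ i → i ≤ n → ∑ k ∈ Finset.Icc 1 (i - 1), d k ≤ u i := by
    intro i
    induction i with
    | zero => omega
    | succ i ih =>
      intro _ hle
      rcases Nat.eq_zero_or_pos i with hi0 | hi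
      · subst hi0
        simpa [hu, sub_nonneg] using h1
      · have hrec := hic (i + 1) (by omega) hle
        simp only [Nat.add_sub_cancel] at hrec
        have hprev := ih hi (by omega)
        have hsum : ∑ k ∈ Finset.Icc 1 i, d k
            = ∑ k ∈ Finset.Icc 1 (i - 1), d k + d i := by
          have h : (i - 1) + 1 = i := by omega
          calc ∑ k ∈ Finset.Icc 1 i, d k
              = ∑ k ∈ Finset.Icc 1 ((i - 1) + 1), d k := by rw [h]
            _ = ∑ k ∈ Finset.Icc 1 (i - 1), d k + d ((i - 1) + 1) :=
                Finset.sum_Icc_succ_top (by omega) _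
            _ = ∑ k ∈ Finset.Icc 1 (i - 1), d k + d i := by rw [h]
        simp only [Nat.add_sub_cancel]
        rw [hsum]
        have : u i + d i = t (j i) - c (i + 1) (j i) := by simp only [hu, hd]; ring
        simp only [hu] at *
        linarith
  -- summed claim
  have claimS : ∀ N, 1 ≤ N → N ≤ n →
      ∑ k ∈ Finset.Icc 1 (N - 1), ((N : ℝ) - k) * d k ≤ ∑ i ∈ Finset.Icc 1 N, u i := by
    intro N
    induction N with
    | zero => omega
    | succ N ih =>
      intro _ hle
      rcases Nat.eq_zero_or_pos N with hN0 | hN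
      · subst hN0
        simpa [hu, sub_nonneg] using h1
      · have hIH := ih hN (by omega)
        have hC := claimC (N + 1) (by omega) hle
        simp only [Nat.add_sub_cancel] at hC ⊢
        have eR : ∑ i ∈ Finset.Icc 1 (N + 1), u i
            = ∑ i ∈ Finset.Icc 1 N, u i + u (N + 1) :=
          Finset.sum_Icc_succ_top (by omega) _
        have eL : ∑ k ∈ Finset.Icc 1 N, ((N : ℝ) + 1 - k) * d k
            = ∑ k ∈ Finset.Icc 1 (N - 1), ((N : ℝ) - k) * d k
              + ∑ k ∈ Finset.Icc 1 N, d k := by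
          have e1 : ∑ k ∈ Finset.Icc 1 N, ((N : ℝ) + 1 - k) * d k
              = ∑ k ∈ Finset.Icc 1 N, (((N : ℝ) - k) * d k + d k) := by
            apply Finset.sum_congr rfl; intro k _; ring
          rw [e1, Finset.sum_add_distrib]
          congr 1
          have h : (N - 1) + 1 = N := by omega
          calc ∑ k ∈ Finset.Icc 1 N, ((N : ℝ) - k) * d k
              = ∑ k ∈ Finset.Icc 1 ((N - 1) + 1), ((N : ℝ) - k) * d k := by rw [h]
            _ = ∑ k ∈ Finset.Icc 1 (N - 1), ((N : ℝ) - k) * d k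
                + ((N : ℝ) - ((N - 1) + 1 : ℕ)) * d ((N - 1) + 1) :=
                Finset.sum_Icc_succ_top (by omega) _
            _ = ∑ k ∈ Finset.Icc 1 (N - 1), ((N : ℝ) - k) * d k := by
                rw [h]
                have : ((N : ℝ) - (N : ℕ)) * d N = 0 := by ring
                rw [this, add_zero]
        have hcast : ((N + 1 : ℕ) : ℝ) = (N : ℝ) + 1 := by push_cast; ring
        rw [eR, hcast, eL]
        linarith
  obtain ⟨N, rfl⟩ : ∃ N, n = N + 1 := ⟨n - 1, by omega⟩
  have key := claimS (N + 1) (by omega) le_rfl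
  simp only [Nat.add_sub_cancel] at key ⊢
  have e1 : ∑ i ∈ Finset.Icc 1 (N + 1), (ρ (j i) - t (j i))
      = ∑ i ∈ Finset.Icc 1 (N + 1), (ρ (j i) - c i (j i))
        - ∑ i ∈ Finset.Icc 1 (N + 1), u i := by
    rw [← Finset.sum_sub_distrib]
    apply Finset.sum_congr rfl; intro i _; simp [hu]
  have e2 : ∑ i ∈ Finset.Icc 1 N,
      (ρ (j i) - c i (j i) - (((N + 1 : ℕ) : ℝ) - i) * (c i (j i) - c (i + 1) (j i)))
      = ∑ i ∈ Finset.Icc 1 N, (ρ (j i) - c i (j i))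
        - ∑ i ∈ Finset.Icc 1 N, (((N + 1 : ℕ) : ℝ) - i) * d i := by
    rw [← Finset.sum_sub_distrib]
  have e3 : ∑ i ∈ Finset.Icc 1 (N + 1), (ρ (j i) - c i (j i))
      = ∑ i ∈ Finset.Icc 1 N, (ρ (j i) - c i (j i))
        + (ρ (j (N + 1)) - c (N + 1) (j (N + 1))) :=
    Finset.sum_Icc_succ_top (by omega) _
  rw [e1, e2, e3]
  linarith
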